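/- arXiv:1205.5735 — 4 statements merged into one kernel-verified Lean document; each statement's English description precedes it below -/
import Mathlib

section
/- If R_0 > 1, the starvation relation is transitive: if j ≻ k and k ≻ ℓ, then j ≻ ℓ. -/
open scoped ENNReal

/-- Product of the follow-on constants over the cyclic interval `[j,k)` in `ZMod n`
(the empty product for `j = k`). -/
noncomputable def cycProd {n : ℕ} (M : ZMod n → ℝ≥0∞) (j k : ZMod n) : ℝ≥0∞ :=
  ∏ i ∈ Finset.range ((k - j).val), M (j + (i : ZMod n))

open Finset in
lemma full_cycle {n : ℕ} [NeZero n] (M : ZMod n → ℝ≥0∞) (x : ZMod n) :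
    ∏ i ∈ range n, M (x + (i : ZMod n)) = ∏ j : ZMod n, M j := by
  rw [← Fin.prod_univ_eq_prod_range (fun i => M (x + (i : ZMod n))) n]
  apply Fintype.prod_bijective (fun i : Fin n => x + ((i : ℕ) : ZMod n))
  · constructor
    · intro a b h
      have : ((a : ℕ) : ZMod n) = ((b : ℕ) : ZMod n) := add_left_cancel h
      have := (ZMod.natCast_eq_natCast_iff' _ _ _).mp this
      simpa [Nat.mod_eq_of_lt a.isLt, Nat.mod_eq_of_lt b.isLt, Fin.ext_iff] using this
    · intro y
      refine ⟨⟨(y - x).val, ZMod.val_lt _⟩, ?_⟩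
      simp [ZMod.natCast_val, ZMod.cast_id]
  · intro i; rfl

open Finset in
lemma cycProd_le_mul {n : ℕ} [NeZero n] (M : ZMod n → ℝ≥0∞)
    (hR0 : 1 ≤ ∏ j : ZMod n, M j) (j k l : ZMod n) :
    cycProd M j l ≤ cycProd M j k * cycProd M k l := by
  set a := (k - j).val with ha
  set c := (l - k).val with hc
  have hk : k = j + (a : ZMod n) := by simp [ha, ZMod.natCast_val, ZMod.cast_id]
  have hprod : cycProd M j k * cycProd M k l = ∏ i ∈ range (a + c), M (j + (i : ZMod n)) := by
    rw [prod_range_add]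
    congr 1
    rw [cycProd]
    apply prod_congr rfl
    intro i _
    congr 1
    rw [hk]
    push_cast
    ring
  have hval : (l - j).val = (a + c) % n := by
    have : l - j = ((a : ZMod n) + (c : ZMod n)) := by
      simp [ha, hc, ZMod.natCast_val, ZMod.cast_id]
    rw [this, ← Nat.cast_add, ZMod.val_natCast]
  rw [hprod, cycProd, hval]
  by_cases h : a + c < n
  · rw [Nat.mod_eq_of_lt h]
  · push_neg at h
    have haa : a < n := ZMod.val_lt _
    have hcc : c < n := ZMod.val_lt _
    have h3 : (a + c) % n = a + c - n := by
      rw [Nat.mod_eq_sub_mod h, Nat.mod_eq_of_lt (by omega)]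
    have heq : a + c = (a + c) % n + n := by omega
    calc ∏ i ∈ range ((a + c) % n), M (j + (i : ZMod n))
        ≤ (∏ i ∈ range ((a + c) % n), M (j + (i : ZMod n))) *
            ∏ i ∈ range n, M ((j + (((a + c) % n : ℕ) : ZMod n)) + (i : ZMod n)) := by
          rw [full_cycle]; exact le_mul_of_one_le_right' hR0
      _ = ∏ i ∈ range (a + c), M (j + (i : ZMod n)) := by
          conv_rhs => rw [heq, prod_range_add]
          congr 1
          apply prod_congr rfl
          intro i _
          congr 1
          push_cast
          ring

/-- If `R₀ > 1`, the starvation relation is transitive: `j ≻ k` and `k ≻ ℓ` imply `j ≻ ℓ`. -/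
theorem starvation_transitive {n : ℕ} [NeZero n]
    (M : ZMod n → ℝ≥0∞) (hM : ∀ j, 0 < M j ∧ M j < ⊤)
    (b : ZMod n → ℝ≥0∞) (hb : ∀ j, 0 < b j)
    (hR0 : 1 < ∏ j : ZMod n, M j) :
    ∀ j k l : ZMod n,
      (b j < ⊤ ∧ b j * cycProd M j k < b k) →
      (b k < ⊤ ∧ b k * cycProd M k l < b l) →
      (b j < ⊤ ∧ b j * cycProd M j l < b l) := by
  intro j k l ⟨hjt, hjk⟩ ⟨hkt, hkl⟩
  refine ⟨hjt, ?_⟩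
  have hpos : 0 < cycProd M k l := by
    apply CanonicallyOrderedAdd.prod_pos.mpr
    intro i _; exact (hM _).1
  have hfin : cycProd M k l < ⊤ := ENNReal.prod_lt_top fun i _ => (hM _).2
  calc b j * cycProd M j l
      ≤ b j * (cycProd M j k * cycProd M k l) :=
        mul_le_mul_right (cycProd_le_mul M hR0.le j k l) _
    _ = (b j * cycProd M j k) * cycProd M k l := by ring
    _ < b k * cycProd M k l := by
        exact (ENNReal.mul_lt_mul_iff_left hpos.ne' hfin.ne).mpr hjk
    _ < b l := hkl
end

section
/- If the parameter set is generic and a biologically meaningful infected fixed point (S*,T*) is moderated, then it is saturated: Unstr(θ) ⊆ Reg(S*,T*) and Str(θ) ⊆ Unreg(S*,T*), hence Reg(S*,T*) = Unstr(θ). -/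
/-- If the parameter set is generic and a biologically meaningful infected fixed point
is moderated (every unregulated stage has `S* < b`), then it is saturated:
`Unstr(θ) ⊆ Reg(S*,T*)` and `Str(θ) ⊆ Unreg(S*,T*)`, i.e. `Reg(S*,T*) = Unstr(θ)`.
Here `i` starves `j` means `b i * M_{ij} < b j`; the needed fixed-point facts are
supplied as hypotheses. -/
theorem moderated_implies_saturated {n : ℕ} [NeZero n]
    (S T b : ZMod n → ℝ) (M2 : ZMod n → ZMod n → ℝ)
    (hT : ∀ j, 0 ≤ T j)
    (hb : ∀ j, 0 < b j) (hM2 : ∀ j k, 0 < M2 j k)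
    -- regulated stages sit at their threshold
    (hreg : ∀ j, 0 < T j → S j = b j)
    -- value of an unregulated stage via its nearest preceding regulated stage
    (hunreg : ∀ j m : ZMod n, T j = 0 → 0 < T m →
      (∀ i ∈ Finset.range ((j - m).val - 1), T (m + 1 + (i : ZMod n)) = 0) →
      S j = b m * M2 m j)
    -- every unregulated stage has a nearest preceding regulated stage (Reg ≠ ∅)
    (hexists : ∀ j, T j = 0 → ∃ m, 0 < T m ∧
      ∀ i ∈ Finset.range ((j - m).val - 1), T (m + 1 + (i : ZMod n)) = 0)
    -- Proposition: if j starves k and j is regulated, then k is unregulated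
    (hstarvesProp : ∀ j k, b j * M2 j k < b k → 0 < T j → T k = 0)
    -- every starvable stage is starved by some unstarvable (≻-maximal) stage
    (hmax : ∀ k, (∃ j, b j * M2 j k < b k) →
      ∃ j, b j * M2 j k < b k ∧ ¬∃ i, b i * M2 i j < b j)
    -- moderation
    (hmod : ∀ j, T j = 0 → S j < b j) :
    (∀ j, (¬∃ i, b i * M2 i j < b j) → 0 < T j) ∧
      (∀ k, (∃ i, b i * M2 i k < b k) → T k = 0) := by
  have h1 : ∀ j, (¬∃ i, b i * M2 i j < b j) → 0 < T j := by
    intro j hj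
    rcases (hT j).lt_or_eq with h | h
    · exact h
    · exfalso
      obtain ⟨m, hm, hnear⟩ := hexists j h.symm
      have hS : S j = b m * M2 m j := hunreg j m h.symm hm hnear
      exact hj ⟨m, by rw [← hS]; exact hmod j h.symm⟩
  refine ⟨h1, fun k hk => ?_⟩
  obtain ⟨j, hjk, hjmax⟩ := hmax k hk
  exact hstarvesProp j k hjk (h1 j hjmax)
end

section
/- If the parameter set is generic and a biologically meaningful infected fixed point (S*,T*) is saturated (Reg(S*,T*) = Unstr(θ)), then it is moderated: S*_k < b_k for every unregulated stage k. -/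
/-- If the parameter set is generic and a biologically meaningful infected fixed point
is saturated (`Reg(S*,T*) = Unstr(θ)`), then it is moderated: `S* k < b k` for every
unregulated stage `k`.  Here `i` starves `j` means `b i * M_{ij} < b j`; the needed
fixed-point facts and the multiplicativity of the cyclic products `M_{jk}` are
supplied as hypotheses. -/
theorem saturated_implies_moderated {n : ℕ} [NeZero n]
    (S T b : ZMod n → ℝ) (M2 : ZMod n → ZMod n → ℝ)
    (hT : ∀ j, 0 ≤ T j)
    (hb : ∀ j, 0 < b j) (hM2 : ∀ j k, 0 < M2 j k)
    -- multiplicativity of the cyclic products: M_{jm} M_{mk} = M_{jk} for m ∈ [j,k]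
    (hMmul : ∀ j m k : ZMod n, (m - j).val ≤ (k - j).val →
      M2 j m * M2 m k = M2 j k)
    -- regulated stages sit at their threshold
    (hreg : ∀ j, 0 < T j → S j = b j)
    -- value of an unregulated stage via its nearest preceding regulated stage
    (hunreg : ∀ k m : ZMod n, T k = 0 → 0 < T m →
      (∀ i ∈ Finset.range ((k - m).val - 1), T (m + 1 + (i : ZMod n)) = 0) →
      S k = b m * M2 m k)
    -- every unregulated stage has a nearest preceding regulated stage (Reg ≠ ∅)
    (hexists : ∀ k, T k = 0 → ∃ m, 0 < T m ∧
      ∀ i ∈ Finset.range ((k - m).val - 1), T (m + 1 + (i : ZMod n)) = 0)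
    -- every starvable stage is starved by some unstarvable (≻-maximal) stage
    (hmax : ∀ k, (∃ j, b j * M2 j k < b k) →
      ∃ j, b j * M2 j k < b k ∧ ¬∃ i, b i * M2 i j < b j)
    -- saturation: Reg(S*,T*) = Unstr(θ)
    (hsat : ∀ j, 0 < T j ↔ ¬∃ i, b i * M2 i j < b j) :
    ∀ k, T k = 0 → S k < b k := by
  intro k hTk
  have hstarv : ∃ i, b i * M2 i k < b k := by
    by_contra h
    have := (hsat k).mpr h
    linarith
  obtain ⟨j, hjk, hjuns⟩ := hmax k hstarv
  have hTj : 0 < T j := (hsat j).mpr hjuns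
  obtain ⟨m, hTm, hgap⟩ := hexists k hTk
  have hSk : S k = b m * M2 m k := hunreg k m hTk hTm hgap
  have hmuns : ¬∃ i, b i * M2 i m < b m := (hsat m).mp hTm
  have hjm : b m ≤ b j * M2 j m := le_of_not_gt (fun h => hmuns ⟨j, h⟩)
  have hle : (m - j).val ≤ (k - j).val := by
    by_contra hlt
    push_neg at hlt
    -- notation
    set a := (m - j).val with ha
    set c := (k - j).val with hc
    have hn : 0 < n := Nat.pos_of_ne_zero (NeZero.ne n)
    have hmj : m - j ≠ 0 := by
      intro h0
      rw [h0, ZMod.val_zero] at ha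
      omega
    have hmjne : m ≠ j := fun h => hmj (by rw [h, sub_self])
    have hkj : k - j ≠ 0 := by
      intro h0
      have : k = j := by
        have := sub_eq_zero.mp h0; exact this
      rw [this] at hTk; linarith
    have hapos : 0 < a := by
      rw [ha]; exact (ZMod.val_pos).mpr hmj
    have hcpos : 0 < c := by
      rw [hc]; exact (ZMod.val_pos).mpr hkj
    have haltn : a < n := ZMod.val_lt _
    have hcltn : c < n := ZMod.val_lt _
    -- (j - m).val = n - a
    have hd : (j - m).val = n - a := by
      have hneg : j - m = -(m - j) := by ring
      rw [hneg, ZMod.neg_val]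
      simp [hmj, ha]
    -- (k - m).val = c + (n - a)
    have hsum : k - m = (k - j) + (j - m) := by ring
    have hkm : (k - m).val = c + (n - a) := by
      rw [hsum, ZMod.val_add_of_lt]
      · rw [hd]
      · rw [hd, ← hc]; omega
    -- j lies strictly between m and k, so T j = 0 by the gap hypothesis
    have hidx : (n - a) - 1 < (k - m).val - 1 := by omega
    have hTj0 := hgap ((n - a) - 1) (Finset.mem_range.mpr hidx)
    have hcast : m + 1 + (((n - a) - 1 : ℕ) : ZMod n) = j := by
      have h1 : ((((n - a) - 1) + 1 : ℕ) : ZMod n) = ((n - a : ℕ) : ZMod n) := by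
        congr 1; omega
      have h2 : ((n - a : ℕ) : ZMod n) = j - m := by
        rw [← hd, ZMod.natCast_val, ZMod.cast_id]
      push_cast at h1
      calc m + 1 + (((n - a) - 1 : ℕ) : ZMod n)
          = m + ((((n - a) - 1 : ℕ) : ZMod n) + 1) := by ring
        _ = m + (j - m) := by rw [h1, h2]
        _ = j := by ring
    rw [hcast] at hTj0
    linarith
  have hmul := hMmul j m k hle
  rw [hSk]
  calc b m * M2 m k ≤ (b j * M2 j m) * M2 m k := by
        exact mul_le_mul_of_nonneg_right hjm (le_of_lt (hM2 m k))
    _ = b j * M2 j k := by rw [mul_assoc, hmul]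
    _ < b k := hjk
end

section
/- If SE(θ) ≠ ∅, then ≻ is transitive: j ≻ k and k ≻ ℓ imply j ≻ ℓ; in particular the case ℓ ∈ [j,k] is impossible since (j,k] ∪ (k,ℓ] would cover all stages while avoiding SE(θ). -/
open scoped ENNReal

lemma aux_val_sub {n : ℕ} [NeZero n] {a b : ZMod n} (h : a.val < b.val) :
    (a - b).val = a.val + n - b.val := by
  have hb : b ≠ 0 := by
    intro hb0; rw [hb0, ZMod.val_zero] at h; omega
  have : NeZero b := ⟨hb⟩
  have hbn : b.val < n := ZMod.val_lt b
  have han : a.val < n := ZMod.val_lt a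
  rw [sub_eq_add_neg, ZMod.val_add, ZMod.val_neg_of_ne_zero]
  have h1 : a.val + (n - b.val) = a.val + n - b.val := by omega
  rw [h1, Nat.mod_eq_of_lt (by omega)]

/-- If `SE(θ) ≠ ∅`, the starvation relation is transitive: `j ≻ k` and `k ≻ ℓ` imply
`j ≻ ℓ`.  Here `j ≻ k` means the cyclic interval `(j,k]` (the stages `m` with
`0 < (m−j).val ≤ (k−j).val`) avoids `SE(θ)`, `b j < ∞`, and `b j * M_{jk} < b k`.
The cyclic products satisfy `M_{jk} * M_{kℓ} = M_{jℓ}` whenever `k ∈ [j,ℓ]`. -/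
theorem SE_starvation_transitive {n : ℕ} [NeZero n]
    (SE : Set (ZMod n)) (hSE : SE.Nonempty)
    (b : ZMod n → ℝ≥0∞) (hb : ∀ j, 0 < b j)
    (M2 : ZMod n → ZMod n → ℝ≥0∞) (hM2 : ∀ j k, 0 < M2 j k ∧ M2 j k < ⊤)
    (hMmul : ∀ j k l : ZMod n, (k - j).val ≤ (l - j).val →
      M2 j k * M2 k l = M2 j l) :
    ∀ j k l : ZMod n,
      ((∀ m : ZMod n, 0 < (m - j).val ∧ (m - j).val ≤ (k - j).val → m ∉ SE) ∧
          b j < ⊤ ∧ b j * M2 j k < b k) →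
      ((∀ m : ZMod n, 0 < (m - k).val ∧ (m - k).val ≤ (l - k).val → m ∉ SE) ∧
          b k < ⊤ ∧ b k * M2 k l < b l) →
      ((∀ m : ZMod n, 0 < (m - j).val ∧ (m - j).val ≤ (l - j).val → m ∉ SE) ∧
          b j < ⊤ ∧ b j * M2 j l < b l) := by
  rintro j k l ⟨h1, hjfin, hjk⟩ ⟨h2, hkfin, hkl⟩
  have hmk : ∀ m : ZMod n, m - k = (m - j) - (k - j) := by intro m; ring
  by_cases hc : (k - j).val ≤ (l - j).val
  · refine ⟨?_, hjfin, ?_⟩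
    · intro m ⟨hm0, hmL⟩
      by_cases hmK : (m - j).val ≤ (k - j).val
      · exact h1 m ⟨hm0, hmK⟩
      · push_neg at hmK
        have e1 : (m - k).val = (m - j).val - (k - j).val := by
          rw [hmk m, ZMod.val_sub (le_of_lt hmK)]
        have e2 : (l - k).val = (l - j).val - (k - j).val := by
          rw [hmk l, ZMod.val_sub hc]
        exact h2 m ⟨by omega, by omega⟩
    · have hmul := hMmul j k l hc
      calc b j * M2 j l = (b j * M2 j k) * M2 k l := by rw [mul_assoc, hmul]
        _ < b k * M2 k l := by
            rw [mul_comm _ (M2 k l), mul_comm (b k)]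
            exact ENNReal.mul_lt_mul_right (hM2 k l).1.ne' (hM2 k l).2.ne hjk
        _ < b l := hkl
  · exfalso
    push_neg at hc
    obtain ⟨m, hm⟩ := hSE
    have hKpos : 0 < (k - j).val := by omega
    have hKn : (k - j).val < n := ZMod.val_lt _
    have hmn : (m - j).val < n := ZMod.val_lt _
    have e2 : (l - k).val = (l - j).val + n - (k - j).val := by
      rw [hmk l, aux_val_sub hc]
    by_cases h0 : (m - j).val = 0
    · -- m = j
      have hmj : m = j := by
        have := (ZMod.val_eq_zero _).mp h0
        have : m - j = 0 := this
        linear_combination this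
      have hne : NeZero (k - j) := ⟨fun h => by rw [h, ZMod.val_zero] at hKpos; omega⟩
      have e1 : (m - k).val = n - (k - j).val := by
        rw [hmk m]
        have : m - j - (k - j) = -(k - j) := by rw [(ZMod.val_eq_zero _).mp h0]; ring
        rw [this, ZMod.val_neg_of_ne_zero]
      exact h2 m ⟨by omega, by omega⟩ hm
    · by_cases hmK : (m - j).val ≤ (k - j).val
      · exact h1 m ⟨by omega, hmK⟩ hm
      · push_neg at hmK
        have e1 : (m - k).val = (m - j).val - (k - j).val := by
          rw [hmk m, ZMod.val_sub (le_of_lt hmK)]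
        exact h2 m ⟨by omega, by omega⟩ hm
end
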